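/- For every complex number t with 0 < r₀ ≤ |t| ≤ 1 and every positive integer n, |t^{-n} - conj(t)^n| ≤ (2n / r₀^n)·|1 - |t||. -/

import Mathlib

theorem stmt_1 (t : ℂ) (r₀ : ℝ) (hr : 0 < r₀) (h0 : r₀ ≤ ‖t‖)
    (h1 : ‖t‖ ≤ 1) (n : ℕ) (hn : 0 < n) :
    ‖t ^ (-(n : ℤ)) - (starRingEnd ℂ t) ^ n‖ ≤
      (2 * n / r₀ ^ n) * |1 - ‖t‖| := by
  set a := ‖t‖ with ha
  have ha0 : 0 < a := lt_of_lt_of_le hr h0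
  have ht : t ≠ 0 := by
    intro h
    rw [ha, h] at ha0; simp at ha0
  have hmc : t * starRingEnd ℂ t = ((a : ℂ)) ^ 2 := by
    rw [Complex.mul_conj, Complex.normSq_eq_norm_sq]
    push_cast
    ring
  have key : t ^ (-(n:ℤ)) - (starRingEnd ℂ t) ^ n = (1 - (a:ℂ) ^ (2*n)) / t ^ n := by
    rw [zpow_neg, zpow_natCast]
    rw [eq_div_iff (pow_ne_zero n ht)]
    have : (a:ℂ) ^ (2*n) = (t * starRingEnd ℂ t) ^ n := by
      rw [hmc, ← pow_mul]
    rw [this]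
    field_simp
    ring
  rw [key, norm_div, norm_pow]
  have hnum : ‖(1 - (a:ℂ) ^ (2*n))‖ = 1 - a ^ (2*n) := by
    have : (1 - (a:ℂ) ^ (2*n)) = ((1 - a ^ (2*n) : ℝ) : ℂ) := by push_cast; ring
    rw [this, Complex.norm_real, Real.norm_eq_abs, abs_of_nonneg]
    linarith [pow_le_one₀ (n := 2*n) ha0.le h1]
  rw [hnum, ← ha]
  have habs : |1 - a| = 1 - a := abs_of_nonneg (by linarith)
  rw [habs]
  have hgeom : 1 - a ^ (2*n) ≤ (2*n) * (1 - a) := by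
    have h := Finset.sum_le_card_nsmul (Finset.range (2*n)) (fun i => a ^ i) 1
      (fun i _ => pow_le_one₀ ha0.le h1)
    have hsum : (1 - a) * (∑ i ∈ Finset.range (2*n), a ^ i) = 1 - a ^ (2*n) := by
      have := geom_sum_mul a (2*n)
      nlinarith [this]
    have hsum_le : (∑ i ∈ Finset.range (2*n), a ^ i) ≤ 2*n := by
      simpa using h
    nlinarith [sub_nonneg.mpr h1, hsum_le]
  have hpow : r₀ ^ n ≤ a ^ n := pow_le_pow_left₀ hr.le h0 n
  have h2n : (1 - a ^ (2*n)) / a ^ n ≤ ((2*n) * (1 - a)) / r₀ ^ n := by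
    apply div_le_div₀ (mul_nonneg (by positivity) (by linarith)) hgeom (by positivity) hpow
  calc (1 - a ^ (2*n)) / a ^ n ≤ ((2*n) * (1 - a)) / r₀ ^ n := h2n
    _ = 2 * n / r₀ ^ n * (1 - a) := by ring
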